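/- Let M ∈ F_q[T] be monic irreducible of degree d. The roots Λ_M of the Carlitz polynomial C_M(Z) in a fixed algebraic closure of F_q(T) form an F_q[T]-module under the Carlitz action (A acting as z ↦ C_A(z)) that is cyclic and isomorphic to F_q[T]/(M); in particular |Λ_M| = q^d and every nonzero element of Λ_M generates Λ_M as an F_q[T]-module. -/

import Mathlib

open Polynomial

/-- The set `Λ_M` of roots of the Carlitz polynomial `C_M(Z)` (for `M` monic irreducible
of degree `d`) in an algebraically closed field `L ⊇ F_q[T]` has `q^d` elements, is
stable under the Carlitz action, and is a cyclic `F_q[T]`-module isomorphic to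
`F_q[T]/(M)`: every nonzero `λ ∈ Λ_M` generates it, with `C_A(λ) = C_B(λ) ↔ M ∣ A - B`. -/
theorem stmt8 (Fq : Type) [Field Fq] [Fintype Fq]
    (Carl : Polynomial Fq → Polynomial (Polynomial Fq))
    (h1 : Carl 1 = X)
    (hT : Carl X = X ^ (Fintype.card Fq) + C X * X)
    (hadd : ∀ M N : Polynomial Fq, Carl (M + N) = Carl M + Carl N)
    (hsmul : ∀ (a : Fq) (M : Polynomial Fq), Carl (C a * M) = C (C a) * Carl M)
    (hmul : ∀ M N : Polynomial Fq, Carl (M * N) = (Carl M).comp (Carl N))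
    (L : Type) [Field L] [IsAlgClosed L] [Algebra (Polynomial Fq) L]
    (hinj : Function.Injective (algebraMap (Polynomial Fq) L))
    (M : Polynomial Fq) (hmonic : M.Monic) (hirr : Irreducible M)
    (d : ℕ) (hd : M.natDegree = d)
    (act : Polynomial Fq → L → L)
    (hact : ∀ (A : Polynomial Fq) (z : L),
      act A z = Polynomial.eval z ((Carl A).map (algebraMap (Polynomial Fq) L)))
    (Λ : Set L) (hΛ : Λ = {z : L | act M z = 0}) :
    Λ.ncard = Fintype.card Fq ^ d ∧
    (∀ (A : Polynomial Fq), ∀ z ∈ Λ, act A z ∈ Λ) ∧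
    (∀ lam ∈ Λ, lam ≠ 0 →
      (∀ z ∈ Λ, ∃ A : Polynomial Fq, z = act A lam) ∧
      (∀ A B : Polynomial Fq, act A lam = act B lam ↔ M ∣ A - B)) := by
  classical
  subst hd
  subst hΛ
  set q := Fintype.card Fq with hqdef
  have hq1 : 1 < q := Fintype.one_lt_card
  set φ := algebraMap (Polynomial Fq) L with hφ
  -- basic facts about Carl
  have hC0 : Carl 0 = 0 := by
    have h := hadd 0 0
    rw [add_zero] at h
    exact (left_eq_add.mp h)
  have hCa : ∀ a : Fq, Carl (Polynomial.C a) = C (Polynomial.C a) * X := by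
    intro a
    have h := hsmul a 1
    rw [mul_one, h1] at h
    exact h
  -- basic facts about act
  have hactadd : ∀ A B z, act (A + B) z = act A z + act B z := by
    intro A B z; rw [hact, hact, hact, hadd, Polynomial.map_add, eval_add]
  have hact0 : ∀ z, act 0 z = 0 := by
    intro z; rw [hact, hC0, Polynomial.map_zero, eval_zero]
  have hact1 : ∀ z, act 1 z = z := by
    intro z; rw [hact, h1, map_X, eval_X]
  have hactsub : ∀ A B z, act (A - B) z = act A z - act B z := by
    intro A B z
    have h := hactadd (A - B) B z
    rw [sub_add_cancel] at h
    rw [eq_sub_iff_add_eq]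
    exact h.symm
  have hactmul : ∀ A B z, act (A * B) z = act A (act B z) := by
    intro A B z
    rw [hact, hact, hact, hmul, Polynomial.map_comp, eval_comp]
  have hX0 : (Carl X).eval 0 = 0 := by
    rw [hT]; simp [zero_pow (by omega : q ≠ 0)]
  have heval0 : ∀ A : Polynomial Fq, (Carl A).eval 0 = 0 := by
    intro A
    induction A using Polynomial.induction_on with
    | C a => rw [hCa]; simp
    | add p r hp hr => rw [hadd]; simp [hp, hr]
    | monomial n a ih =>
      have hrw : (Polynomial.C a * X ^ (n + 1)) = (Polynomial.C a * X ^ n) * X := by ring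
      rw [hrw, hmul, eval_comp, hX0, ih]
  have hactz : ∀ A, act A 0 = 0 := by
    intro A
    rw [hact, ← coeff_zero_eq_eval_zero, coeff_map, coeff_zero_eq_eval_zero, heval0, map_zero]
  -- derivative of Carl
  have hqFq : ((q : ℕ) : Fq) = 0 := Nat.cast_card_eq_zero Fq
  have hqP : ((q : ℕ) : Polynomial Fq) = 0 := by
    rw [← map_natCast (Polynomial.C : Fq →+* Polynomial Fq) q, hqFq, map_zero]
  have hderX : derivative (Carl X) = C X := by
    rw [hT]
    simp [derivative_X_pow, hqP]
  have hder : ∀ A : Polynomial Fq, derivative (Carl A) = C A := by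
    intro A
    induction A using Polynomial.induction_on with
    | C a => rw [hCa]; simp
    | add p r hp hr => rw [hadd, derivative_add, hp, hr, map_add]
    | monomial n a ih =>
      have hrw : (Polynomial.C a * X ^ (n + 1)) = (Polynomial.C a * X ^ n) * X := by ring
      rw [hrw, hmul, derivative_comp, hderX, ih, C_comp, ← C_mul]
      congr 1
      ring
  -- Carl of powers of X is monic of degree q ^ n
  have hmonX : (Carl X).Monic := by
    rw [hT]
    refine monic_X_pow_add ?_
    calc degree ((C X : Polynomial (Polynomial Fq)) * X) = degree (C (X : Polynomial Fq) * X ^ 1) := by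
          rw [pow_one]
      _ ≤ (1 : WithBot ℕ) := degree_C_mul_X_pow_le 1 X
      _ < (q : WithBot ℕ) := by exact_mod_cast hq1
  have hdegCX : (Carl X).natDegree = q := by
    have hlt : degree ((C X : Polynomial (Polynomial Fq)) * X) < degree ((X : Polynomial (Polynomial Fq)) ^ q) := by
      rw [degree_X_pow]
      calc degree ((C X : Polynomial (Polynomial Fq)) * X)
          = degree (C (X : Polynomial Fq) * X ^ 1) := by rw [pow_one]
        _ ≤ (1 : WithBot ℕ) := degree_C_mul_X_pow_le 1 X
        _ < (q : WithBot ℕ) := by exact_mod_cast hq1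
    have : (Carl X).degree = (q : WithBot ℕ) := by
      rw [hT, degree_add_eq_left_of_degree_lt hlt, degree_X_pow]
    exact natDegree_eq_of_degree_eq_some this
  have hpow : ∀ n : ℕ, (Carl ((X : Polynomial Fq) ^ n)).Monic ∧ (Carl ((X : Polynomial Fq) ^ n)).natDegree = q ^ n := by
    intro n
    induction n with
    | zero => rw [pow_zero, h1]; exact ⟨monic_X, by simp⟩
    | succ n ih =>
      rw [pow_succ, hmul]
      refine ⟨ih.1.comp hmonX (by rw [hdegCX]; omega), ?_⟩
      rw [natDegree_comp, ih.2, hdegCX, pow_succ]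
  -- Carl as a sum
  let F : Polynomial Fq →+ Polynomial (Polynomial Fq) := AddMonoidHom.mk' Carl hadd
  have hsum : ∀ A : Polynomial Fq,
      Carl A = ∑ i ∈ Finset.range (A.natDegree + 1),
        C (Polynomial.C (A.coeff i)) * Carl ((X : Polynomial Fq) ^ i) := by
    intro A
    calc Carl A
        = F (∑ i ∈ Finset.range (A.natDegree + 1), Polynomial.C (A.coeff i) * X ^ i) := by
          rw [← A.as_sum_range_C_mul_X_pow]; rfl
      _ = ∑ i ∈ Finset.range (A.natDegree + 1), Carl (Polynomial.C (A.coeff i) * X ^ i) :=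
          map_sum F _ _
      _ = _ := Finset.sum_congr rfl fun i _ => hsmul _ _
  have hdegle : ∀ A : Polynomial Fq, (Carl A).natDegree ≤ q ^ A.natDegree := by
    intro A
    rw [hsum A]
    apply natDegree_sum_le_of_forall_le
    intro i hi
    refine (natDegree_C_mul_le _ _).trans ?_
    rw [(hpow i).2]
    exact Nat.pow_le_pow_right (by omega) (Nat.lt_succ_iff.mp (Finset.mem_range.mp hi))
  -- degree of M
  have hd1 : 0 < M.natDegree := by
    rcases Nat.eq_zero_or_pos M.natDegree with h | h
    · exfalso
      have hM1 : M = 1 := hmonic.natDegree_eq_zero.mp h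
      exact hirr.not_isUnit (hM1 ▸ isUnit_one)
    · exact h
  set R := M - X ^ M.natDegree with hR
  have hMdec : M = X ^ M.natDegree + R := by rw [hR]; ring
  have hdegR : (Carl R).degree < ((q ^ M.natDegree : ℕ) : WithBot ℕ) := by
    rcases eq_or_ne R 0 with h0 | h0
    · rw [h0, hC0, degree_zero]
      exact_mod_cast WithBot.bot_lt_coe _
    · have hdR : R.degree < (M.natDegree : WithBot ℕ) := by
        have := degree_sub_lt
          (by rw [degree_X_pow, degree_eq_natDegree hmonic.ne_zero])
          hmonic.ne_zero
          (by rw [hmonic.leadingCoeff, (monic_X_pow M.natDegree).leadingCoeff])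
        rw [degree_eq_natDegree hmonic.ne_zero] at this
        exact this
      have hnR : R.natDegree < M.natDegree := (natDegree_lt_iff_degree_lt h0).mpr hdR
      calc (Carl R).degree ≤ ((Carl R).natDegree : WithBot ℕ) := degree_le_natDegree
        _ ≤ ((q ^ R.natDegree : ℕ) : WithBot ℕ) := by exact_mod_cast hdegle R
        _ < ((q ^ M.natDegree : ℕ) : WithBot ℕ) := by
            exact_mod_cast Nat.pow_lt_pow_right hq1 hnR
  have hCM : Carl M = Carl (X ^ M.natDegree) + Carl R := by rw [← hadd, ← hMdec]
  have hdegXd : (Carl ((X : Polynomial Fq) ^ M.natDegree)).degree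
      = ((q ^ M.natDegree : ℕ) : WithBot ℕ) := by
    rw [degree_eq_natDegree (hpow M.natDegree).1.ne_zero, (hpow M.natDegree).2]
  have hdegCM : (Carl M).degree = ((q ^ M.natDegree : ℕ) : WithBot ℕ) := by
    rw [hCM, degree_add_eq_left_of_degree_lt (by rw [hdegXd]; exact hdegR), hdegXd]
  have hndegCM : (Carl M).natDegree = q ^ M.natDegree := natDegree_eq_of_degree_eq_some hdegCM
  -- the mapped polynomial P
  set P := (Carl M).map φ with hP
  have hPdeg : P.natDegree = q ^ M.natDegree := by
    rw [hP, natDegree_map_eq_of_injective hinj, hndegCM]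
  have hqd_pos : 0 < q ^ M.natDegree := pow_pos (by omega) _
  have hPne : P ≠ 0 := fun h => by rw [h, natDegree_zero] at hPdeg; omega
  have hMφ : φ M ≠ 0 := fun h => hmonic.ne_zero (hinj (by rw [h, map_zero]))
  have hPder : derivative P = C (φ M) := by
    rw [hP, derivative_map, hder, map_C]
  have hPsep : P.Separable := by
    rw [Polynomial.separable_def, hPder]
    exact ⟨0, C (φ M)⁻¹, by rw [zero_mul, zero_add, ← C_mul, inv_mul_cancel₀ hMφ, C_1]⟩
  have hsplits : P.Splits := IsAlgClosed.splits P
  have hcard : Multiset.card P.roots = q ^ M.natDegree := by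
    rw [IsAlgClosed.card_roots_eq_natDegree, hPdeg]
  have hnodup := nodup_roots hPsep
  have hΛeq : {z : L | act M z = 0} = ↑P.roots.toFinset := by
    ext z
    simp only [Set.mem_setOf_eq, Finset.mem_coe, Multiset.mem_toFinset, mem_roots', IsRoot.def]
    rw [hact, ← hP]
    exact ⟨fun h => ⟨hPne, h⟩, fun h => h.2⟩
  have hncard : {z : L | act M z = 0}.ncard = q ^ M.natDegree := by
    rw [hΛeq, Set.ncard_coe_finset, Multiset.toFinset_card_of_nodup hnodup, hcard]
  -- stability
  have hstab : ∀ A z, act M z = 0 → act M (act A z) = 0 := by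
    intro A z hz
    calc act M (act A z) = act (M * A) z := (hactmul M A z).symm
      _ = act (A * M) z := by rw [mul_comm]
      _ = act A (act M z) := hactmul A M z
      _ = 0 := by rw [hz, hactz]
  -- the kernel characterization
  have hiff : ∀ lam, act M lam = 0 → lam ≠ 0 → ∀ A B : Polynomial Fq,
      act A lam = act B lam ↔ M ∣ A - B := by
    intro lam hlam hne A B
    constructor
    · intro h
      by_contra hdvd
      have hco : IsCoprime M (A - B) := (hirr.coprime_iff_not_dvd).mpr hdvd
      obtain ⟨U, V, hUV⟩ := hco
      have hAB : act (A - B) lam = 0 := by rw [hactsub, h, sub_self]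
      have hz : lam = 0 := by
        have h1 := hact1 lam
        rw [← hUV, hactadd, hactmul, hactmul, hlam, hAB, hactz, hactz, add_zero] at h1
        exact h1.symm
      exact hne hz
    · rintro ⟨Q, hQ⟩
      have h0 : act (A - B) lam = 0 := by
        rw [hQ, mul_comm, hactmul, hlam, hactz]
      have h1 := (hactsub A B lam).symm.trans h0
      exact sub_eq_zero.mp h1
  -- surjectivity of the orbit map
  have main : ∀ lam, act M lam = 0 → lam ≠ 0 → ∀ z, act M z = 0 → ∃ A, z = act A lam := by
    intro lam hlam hne z hz
    set g : (Fin M.natDegree → Fq) → Polynomial Fq :=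
      fun c => ∑ i : Fin M.natDegree, Polynomial.C (c i) * X ^ (i : ℕ) with hg
    have hgdeg : ∀ c, (g c).degree < (M.natDegree : WithBot ℕ) := by
      intro c
      refine lt_of_le_of_lt (degree_sum_le _ _) ?_
      rw [Finset.sup_lt_iff (by exact_mod_cast WithBot.bot_lt_coe M.natDegree)]
      intro i _
      exact lt_of_le_of_lt (degree_C_mul_X_pow_le _ _) (by exact_mod_cast i.isLt)
    have hcoeff : ∀ c (i : Fin M.natDegree), (g c).coeff (i : ℕ) = c i := by
      intro c i
      rw [hg]
      simp only [finset_sum_coeff, coeff_C_mul, coeff_X_pow]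
      rw [Finset.sum_eq_single i]
      · simp
      · intro j _ hji
        have : ¬ ((i : ℕ) = (j : ℕ)) := fun h => hji (Fin.ext h.symm)
        simp [this]
      · intro h; exact absurd (Finset.mem_univ i) h
    have hginj : Function.Injective (fun c => act (g c) lam) := by
      intro c c' h
      have hdvd : M ∣ g c - g c' := (hiff lam hlam hne _ _).mp h
      have heq : g c = g c' := by
        by_contra hne'
        have h0 : g c - g c' ≠ 0 := sub_ne_zero.mpr hne'
        have hle := degree_le_of_dvd hdvd h0
        rw [degree_eq_natDegree hmonic.ne_zero] at hle
        have hlt : (g c - g c').degree < (M.natDegree : WithBot ℕ) :=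
          lt_of_le_of_lt (degree_sub_le _ _) (max_lt (hgdeg c) (hgdeg c'))
        exact absurd (lt_of_le_of_lt hle hlt) (lt_irrefl _)
      funext i
      rw [← hcoeff c i, ← hcoeff c' i, heq]
    have hmem : ∀ c, act (g c) lam ∈ P.roots.toFinset := by
      intro c
      rw [Multiset.mem_toFinset, mem_roots']
      refine ⟨hPne, ?_⟩
      have h := hstab (g c) lam hlam
      rw [hact, ← hP] at h
      exact h
    have him : Finset.image (fun c => act (g c) lam) Finset.univ ⊆ P.roots.toFinset := by
      intro x hx
      obtain ⟨c, _, rfl⟩ := Finset.mem_image.mp hx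
      exact hmem c
    have hcardim : (Finset.image (fun c => act (g c) lam) Finset.univ).card
        = q ^ M.natDegree := by
      rw [Finset.card_image_of_injective _ hginj, Finset.card_univ, Fintype.card_fun,
        Fintype.card_fin]
    have hfincard : P.roots.toFinset.card = q ^ M.natDegree := by
      rw [Multiset.toFinset_card_of_nodup hnodup, hcard]
    have him_eq : Finset.image (fun c => act (g c) lam) Finset.univ = P.roots.toFinset :=
      Finset.eq_of_subset_of_card_le him (by rw [hcardim, hfincard])
    have hzmem : z ∈ P.roots.toFinset := by
      rw [Multiset.mem_toFinset, mem_roots']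
      refine ⟨hPne, ?_⟩
      rw [hact, ← hP] at hz
      exact hz
    rw [← him_eq] at hzmem
    obtain ⟨c, _, hc⟩ := Finset.mem_image.mp hzmem
    exact ⟨g c, hc.symm⟩
  -- assemble
  refine ⟨hncard, fun A z hz => hstab A z hz, fun lam hlam hne => ⟨fun z hz => main lam hlam hne z hz, hiff lam hlam hne⟩⟩
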